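/- Fix $K > 0$ and let $f(w) = \frac{(1-w)K}{w^2 + (1-w^2)K} - 1$. Then the unique solution $y(t)$ of the ODE $y' = f(y)$ with $y(0)=1$ satisfies $\exp(-t/\min\{1,K\}) \leq y(t) \leq \exp(-t/\max\{1,K\})$ for all $t \geq 0$. -/

import Mathlib

theorem key_ineq (K : ℝ) (hK : 0 < K) (w : ℝ) (hw0 : 0 < w) (hw1 : w ≤ 1) :
    -w / min 1 K ≤ (1 - w) * K / (w ^ 2 + (1 - w ^ 2) * K) - 1 ∧
    (1 - w) * K / (w ^ 2 + (1 - w ^ 2) * K) - 1 ≤ -w / max 1 K := by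
  have hm : (0:ℝ) < min 1 K := lt_min one_pos hK
  have hM : (0:ℝ) < max 1 K := lt_of_lt_of_le hm min_le_max
  have hw2 : w ^ 2 ≤ 1 := by nlinarith
  have hD : 0 < w ^ 2 + (1 - w ^ 2) * K := by
    rcases le_total K 1 with h | h
    · nlinarith [sq_nonneg w]
    · nlinarith [mul_nonneg (sub_nonneg.2 hw2) (sub_nonneg.2 h)]
  constructor
  · have h1 : -w / min 1 K + 1 = (min 1 K - w) / min 1 K := by field_simp; ring
    rw [le_sub_iff_add_le, h1, div_le_div_iff₀ hm hD]
    rcases le_total 1 K with h | h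
    · rw [min_eq_left h]
      nlinarith [mul_nonneg (sub_nonneg.2 hw1) (sq_nonneg w)]
    · rw [min_eq_right h]
      nlinarith [mul_nonneg (mul_nonneg hw0.le (sub_nonneg.2 h))
        (add_nonneg (sq_nonneg w) (mul_nonneg hK.le (sub_nonneg.2 hw1)))]
  · have h1 : -w / max 1 K + 1 = (max 1 K - w) / max 1 K := by field_simp; ring
    rw [sub_le_iff_le_add, h1, div_le_div_iff₀ hD hM]
    rcases le_total 1 K with h | h
    · rw [max_eq_right h]
      nlinarith [mul_nonneg (mul_nonneg hw0.le (sub_nonneg.2 h))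
        (add_nonneg (sq_nonneg w) (mul_nonneg hK.le (sub_nonneg.2 hw1)))]
    · rw [max_eq_left h]
      nlinarith [mul_nonneg (sub_nonneg.2 hw1) (sq_nonneg w)]

/-- Monotonicity trick: if y has the right derivative bounds on Icc 0 b, bounds hold there. -/
theorem bounds_on_interval (K : ℝ) (hK : 0 < K) (y : ℝ → ℝ) (hy0 : y 0 = 1)
    (hy : ∀ t, 0 ≤ t →
      HasDerivAt y ((1 - y t) * K / ((y t) ^ 2 + (1 - (y t) ^ 2) * K) - 1) t)
    (b : ℝ) (hb : 0 ≤ b) (hrange : ∀ s ∈ Set.Icc 0 b, 0 < y s ∧ y s ≤ 1) :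
    ∀ s ∈ Set.Icc 0 b,
      Real.exp (-s / min 1 K) ≤ y s ∧ y s ≤ Real.exp (-s / max 1 K) := by
  have hm : (0:ℝ) < min 1 K := lt_min one_pos hK
  have hM : (0:ℝ) < max 1 K := lt_of_lt_of_le hm min_le_max
  -- derivative bounds
  have hder : ∀ s ∈ Set.Icc 0 b,
      -(y s) / min 1 K ≤ (1 - y s) * K / ((y s) ^ 2 + (1 - (y s) ^ 2) * K) - 1 ∧
      (1 - y s) * K / ((y s) ^ 2 + (1 - (y s) ^ 2) * K) - 1 ≤ -(y s) / max 1 K := by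
    intro s hs
    exact key_ineq K hK (y s) (hrange s hs).1 (hrange s hs).2
  intro s hs
  constructor
  · -- lower bound via φ t = y t * exp (t / min 1 K) monotone
    set c := min 1 K with hc
    have hφd : ∀ x ∈ Set.Icc (0:ℝ) b, HasDerivAt (fun t => y t * Real.exp (t / c))
        (((1 - y x) * K / ((y x) ^ 2 + (1 - (y x) ^ 2) * K) - 1) * Real.exp (x / c)
          + y x * (Real.exp (x / c) * (1 / c))) x := by
      intro x hx
      exact (hy x hx.1).mul (((hasDerivAt_id x).div_const c).exp)
    have hmono : MonotoneOn (fun t => y t * Real.exp (t / c)) (Set.Icc 0 b) := by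
      apply monotoneOn_of_deriv_nonneg (convex_Icc 0 b)
      · exact fun x hx => ((hφd x hx).continuousAt).continuousWithinAt
      · intro x hx
        rw [interior_Icc] at hx
        exact ((hφd x ⟨hx.1.le, hx.2.le⟩).differentiableAt).differentiableWithinAt
      · intro x hx
        rw [interior_Icc] at hx
        have hx' : x ∈ Set.Icc (0:ℝ) b := ⟨hx.1.le, hx.2.le⟩
        rw [(hφd x hx').deriv]
        have h1 := (hder x hx').1
        have h2 := (hrange x hx').1
        have hE := Real.exp_pos (x / c)
        have : -(y x) / c * Real.exp (x / c) + y x * (Real.exp (x / c) * (1 / c)) = 0 := by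
          field_simp
          ring
        nlinarith [mul_le_mul_of_nonneg_right h1 hE.le]
    have := hmono (Set.left_mem_Icc.2 hb) hs hs.1
    simp only [hy0, Real.exp_zero, mul_one, zero_div] at this
    -- this : 1 ≤ y s * exp (s / c)
    have hE := Real.exp_pos (s / c)
    rw [neg_div, Real.exp_neg, ← one_div, div_le_iff₀ hE]
    linarith [this]
  · set c := max 1 K with hc
    have hφd : ∀ x ∈ Set.Icc (0:ℝ) b, HasDerivAt (fun t => y t * Real.exp (t / c))
        (((1 - y x) * K / ((y x) ^ 2 + (1 - (y x) ^ 2) * K) - 1) * Real.exp (x / c)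
          + y x * (Real.exp (x / c) * (1 / c))) x := by
      intro x hx
      exact (hy x hx.1).mul (((hasDerivAt_id x).div_const c).exp)
    have hmono : AntitoneOn (fun t => y t * Real.exp (t / c)) (Set.Icc 0 b) := by
      apply antitoneOn_of_deriv_nonpos (convex_Icc 0 b)
      · exact fun x hx => ((hφd x hx).continuousAt).continuousWithinAt
      · intro x hx
        rw [interior_Icc] at hx
        exact ((hφd x ⟨hx.1.le, hx.2.le⟩).differentiableAt).differentiableWithinAt
      · intro x hx
        rw [interior_Icc] at hx
        have hx' : x ∈ Set.Icc (0:ℝ) b := ⟨hx.1.le, hx.2.le⟩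
        rw [(hφd x hx').deriv]
        have h1 := (hder x hx').2
        have h2 := (hrange x hx').1
        have hE := Real.exp_pos (x / c)
        have : -(y x) / c * Real.exp (x / c) + y x * (Real.exp (x / c) * (1 / c)) = 0 := by
          field_simp
          ring
        nlinarith [mul_le_mul_of_nonneg_right h1 hE.le]
    have := hmono (Set.left_mem_Icc.2 hb) hs hs.1
    simp only [hy0, Real.exp_zero, mul_one, zero_div] at this
    have hE := Real.exp_pos (s / c)
    rw [neg_div, Real.exp_neg, ← one_div, le_div_iff₀ hE]
    exact this

/-- The solution of `y' = (1-y)K/(y² + (1-y²)K) - 1`, `y(0) = 1`, satisfies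
`exp(-t/min{1,K}) ≤ y(t) ≤ exp(-t/max{1,K})` for all `t ≥ 0`. -/
theorem stmt_6 (K : ℝ) (hK : 0 < K) (y : ℝ → ℝ) (hy0 : y 0 = 1)
    (hy : ∀ t, 0 ≤ t →
      HasDerivAt y ((1 - y t) * K / ((y t) ^ 2 + (1 - (y t) ^ 2) * K) - 1) t) :
    ∀ t, 0 ≤ t →
      Real.exp (-t / min 1 K) ≤ y t ∧ y t ≤ Real.exp (-t / max 1 K) := by
  have hm : (0:ℝ) < min 1 K := lt_min one_pos hK
  have hM : (0:ℝ) < max 1 K := lt_of_lt_of_le hm min_le_max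
  have hcont : ∀ s : ℝ, 0 ≤ s → ContinuousAt y s := fun s hs => (hy s hs).continuousAt
  by_contra hcon
  push_neg at hcon
  -- the bad set
  set S : Set ℝ := {t | 0 ≤ t ∧ (y t < Real.exp (-t / min 1 K) ∨ Real.exp (-t / max 1 K) < y t)}
    with hSdef
  have hS_ne : S.Nonempty := by
    obtain ⟨t₁, ht₁, hbad⟩ := hcon
    refine ⟨t₁, ht₁, ?_⟩
    by_contra h
    push_neg at h
    exact absurd (hbad h.1) (not_lt.2 h.2)
  have hS_bdd : BddBelow S := ⟨0, fun s hs => hs.1⟩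
  set t₀ := sInf S with ht₀def
  have ht₀0 : 0 ≤ t₀ := le_csInf hS_ne (fun s hs => hs.1)
  have h0S : (0:ℝ) ∉ S := by
    intro h
    rcases h.2 with h' | h' <;> simp [hy0] at h'
  -- t₀ ∉ S
  have ht₀S : t₀ ∉ S := by
    intro hmem
    have ht₀pos : 0 < t₀ := lt_of_le_of_ne ht₀0 (fun h => h0S (h ▸ hmem))
    have hgc : ContinuousAt (fun s : ℝ => s) t₀ := continuousAt_id
    rcases hmem.2 with h' | h'
    · have hg : ContinuousAt (fun s => Real.exp (-s / min 1 K) - y s) t₀ :=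
        ((Real.continuous_exp.comp ((continuous_neg).div_const _)).continuousAt).sub
          (hcont t₀ ht₀0)
    -- positivity persists
      have hev : ∀ᶠ s in nhds t₀, 0 < Real.exp (-s / min 1 K) - y s :=
        hg (Ioi_mem_nhds (sub_pos.2 h'))
      rw [Metric.eventually_nhds_iff] at hev
      obtain ⟨δ, hδ, hball⟩ := hev
      set s := max 0 (t₀ - δ/2) with hsdef
      have hs0 : 0 ≤ s := le_max_left _ _
      have hslt : s < t₀ := max_lt ht₀pos (by linarith)
      have hdist : dist s t₀ < δ := by
        rw [Real.dist_eq, abs_sub_lt_iff]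
        constructor
        · linarith
        · have : t₀ - δ/2 ≤ s := le_max_right _ _
          linarith
      have hsS : s ∈ S := ⟨hs0, Or.inl (by linarith [hball hdist])⟩
      exact absurd (csInf_le hS_bdd hsS) (not_le.2 hslt)
    · have hg : ContinuousAt (fun s => y s - Real.exp (-s / max 1 K)) t₀ :=
        (hcont t₀ ht₀0).sub
          ((Real.continuous_exp.comp ((continuous_neg).div_const _)).continuousAt)
      have hev : ∀ᶠ s in nhds t₀, 0 < y s - Real.exp (-s / max 1 K) :=
        hg (Ioi_mem_nhds (sub_pos.2 h'))
      rw [Metric.eventually_nhds_iff] at hev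
      obtain ⟨δ, hδ, hball⟩ := hev
      set s := max 0 (t₀ - δ/2) with hsdef
      have hs0 : 0 ≤ s := le_max_left _ _
      have hslt : s < t₀ := max_lt ht₀pos (by linarith)
      have hdist : dist s t₀ < δ := by
        rw [Real.dist_eq, abs_sub_lt_iff]
        constructor
        · linarith
        · have : t₀ - δ/2 ≤ s := le_max_right _ _
          linarith
      have hsS : s ∈ S := ⟨hs0, Or.inr (by linarith [hball hdist])⟩
      exact absurd (csInf_le hS_bdd hsS) (not_le.2 hslt)
  -- bounds hold on [0, t₀]
  have hIcc : ∀ s ∈ Set.Icc (0:ℝ) t₀,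
      Real.exp (-s / min 1 K) ≤ y s ∧ y s ≤ Real.exp (-s / max 1 K) := by
    intro s hs
    have hsS : s ∉ S := by
      rcases lt_or_eq_of_le hs.2 with h | h
      · intro hmem
        exact absurd (csInf_le hS_bdd hmem) (not_le.2 h)
      · exact h ▸ ht₀S
    rw [hSdef] at hsS
    simp only [Set.mem_setOf_eq, not_and_or, not_or, not_lt] at hsS
    rcases hsS with h | h
    · exact absurd hs.1 h
    · exact h
  have hrange₀ : ∀ s ∈ Set.Icc (0:ℝ) t₀, 0 < y s ∧ y s ≤ 1 := by
    intro s hs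
    refine ⟨lt_of_lt_of_le (Real.exp_pos _) (hIcc s hs).1, le_trans (hIcc s hs).2 ?_⟩
    exact Real.exp_le_one_iff.2
      (div_nonpos_of_nonpos_of_nonneg (neg_nonpos.2 hs.1) hM.le)
  -- find ε > 0 so that y stays in (0,1] on (t₀, t₀+ε]
  have hε : ∃ ε > 0, ∀ s, t₀ < s → s ≤ t₀ + ε → 0 < y s ∧ y s ≤ 1 := by
    have hyt₀ := hrange₀ t₀ ⟨ht₀0, le_rfl⟩
    rcases lt_or_eq_of_le hyt₀.2 with hlt | heq
    · -- y t₀ < 1 : continuity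
      have hev : ∀ᶠ s in nhds t₀, y s ∈ Set.Ioo (0:ℝ) 1 :=
        (hcont t₀ ht₀0) (Ioo_mem_nhds hyt₀.1 hlt)
      rw [Metric.eventually_nhds_iff] at hev
      obtain ⟨δ, hδ, hball⟩ := hev
      refine ⟨δ/2, by linarith, fun s hs1 hs2 => ?_⟩
      have : dist s t₀ < δ := by
        rw [Real.dist_eq, abs_sub_lt_iff]; constructor <;> linarith
      have := hball this
      exact ⟨this.1, this.2.le⟩
    · -- y t₀ = 1, so t₀ = 0; use derivative -1 at 0
      have ht₀eq : t₀ = 0 := by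
        by_contra h
        have ht₀pos : 0 < t₀ := lt_of_le_of_ne ht₀0 (Ne.symm h)
        have h1 : (1:ℝ) ≤ Real.exp (-t₀ / max 1 K) := heq ▸ (hIcc t₀ ⟨ht₀0, le_rfl⟩).2
        have h2 : Real.exp (-t₀ / max 1 K) < 1 :=
          Real.exp_lt_one_iff.2 (div_neg_of_neg_of_pos (neg_neg_of_pos ht₀pos) hM)
        linarith
      have hder : HasDerivAt y (-1 : ℝ) 0 := by
        have := hy 0 le_rfl
        rw [hy0] at this
        norm_num at this
        exact this
      rw [hasDerivAt_iff_tendsto_slope] at hder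
      have hev := hder (Ioo_mem_nhds (show (-2:ℝ) < -1 by norm_num)
        (show (-1:ℝ) < -1/2 by norm_num))
      rw [Filter.mem_map, Metric.mem_nhdsWithin_iff] at hev
      obtain ⟨δ, hδ, hball⟩ := hev
      refine ⟨min (δ/2) (1/4), lt_min (by linarith) (by norm_num), fun s hs1 hs2 => ?_⟩
      rw [ht₀eq] at hs1 hs2
      have hs2' : s ≤ min (δ/2) (1/4) := by linarith
      have hsδ : s ≤ δ/2 := le_trans hs2' (min_le_left _ _)
      have hs4 : s ≤ 1/4 := le_trans hs2' (min_le_right _ _)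
      have hne : s ∈ ({(0:ℝ)}ᶜ : Set ℝ) := by
        simp only [Set.mem_compl_iff, Set.mem_singleton_iff]
        exact ne_of_gt hs1
      have hdist : dist s 0 < δ := by
        rw [Real.dist_eq, sub_zero, abs_of_pos hs1]; linarith
      have hsl : slope y 0 s ∈ Set.Ioo (-2:ℝ) (-1/2) :=
        hball ⟨Metric.mem_ball.2 hdist, hne⟩
      have hslope : slope y 0 s = (y s - 1) / s := by
        rw [slope_def_field, hy0]; ring
      rw [hslope] at hsl
      obtain ⟨ha, hb2⟩ := hsl
      have h1 : -2 * s < y s - 1 := (lt_div_iff₀ hs1).1 ha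
      have h2 : y s - 1 < -1/2 * s := (div_lt_iff₀ hs1).1 hb2
      constructor <;> linarith
  -- conclude: bounds hold on [0, t₀ + ε], contradicting inf
  obtain ⟨ε, hεpos, hεprop⟩ := hε
  have hrange : ∀ s ∈ Set.Icc (0:ℝ) (t₀ + ε), 0 < y s ∧ y s ≤ 1 := by
    intro s hs
    rcases le_or_gt s t₀ with h | h
    · exact hrange₀ s ⟨hs.1, h⟩
    · exact hεprop s h hs.2
  have hbounds := bounds_on_interval K hK y hy0 hy (t₀ + ε) (by linarith) hrange
  obtain ⟨s, hsS, hslt⟩ := (csInf_lt_iff hS_bdd hS_ne).1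
    (show t₀ < t₀ + ε by linarith)
  have := hbounds s ⟨hsS.1, hslt.le⟩
  rcases hsS.2 with h | h
  · exact absurd this.1 (not_le.2 h)
  · exact absurd this.2 (not_le.2 h)
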